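/- Let $n \ge 3$, let $d \ge 2$ be an integer, and set $c = \lfloor n/2 \rfloor + 1$ (so $c \ge 2$). Let $a_0, a_1, \dots, a_n$ be positive real numbers with $a_0 = 1$ and $a_1 = d$, satisfying $a_i^2 \ge a_{i-1}a_{i+1}$ for all $1 \le i \le n-1$, and suppose $a_c \le d^c - 1$. Then for every integer $i$ with $c \le i \le n$, one has $a_i \le (1 - d^{-c})^{\frac{i-1}{c-1}}\, d^{\,i}$, where the exponent $\frac{i-1}{c-1}$ is a real power. -/

import Mathlib

/-- Numerical content of Proposition 3: let `n ≥ 3`, `d ≥ 2`, `c = ⌊n/2⌋ + 1`, and let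
`a₀, …, aₙ` be positive reals with `a₀ = 1`, `a₁ = d`, log-concave, and `a_c ≤ d^c - 1`.
Then for `c ≤ i ≤ n`, `aᵢ ≤ (1 - d^{-c})^{(i-1)/(c-1)} dⁱ`. -/
theorem degree_bound_of_log_concave (n d : ℕ) (hn : 3 ≤ n) (hd : 2 ≤ d)
    (c : ℕ) (hc : c = n / 2 + 1) (a : ℕ → ℝ)
    (hpos : ∀ i ≤ n, 0 < a i) (h0 : a 0 = 1) (h1 : a 1 = d)
    (hlc : ∀ i : ℕ, 1 ≤ i → i + 1 ≤ n → a (i - 1) * a (i + 1) ≤ a i ^ 2)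
    (hac : a c ≤ (d : ℝ) ^ c - 1) :
    ∀ i : ℕ, c ≤ i → i ≤ n →
      a i ≤ (1 - (d : ℝ) ^ (-(c : ℤ))) ^ (((i : ℝ) - 1) / ((c : ℝ) - 1)) * (d : ℝ) ^ i := by
  have hD2 : (2:ℝ) ≤ (d:ℝ) := by exact_mod_cast hd
  have hD0 : (0:ℝ) < (d:ℝ) := by linarith
  have hc2 : 2 ≤ c := by omega
  have hcn : c ≤ n := by omega
  set q : ℝ := a c / a (c-1) with hqdef
  have hqpos : 0 < q := div_pos (hpos c hcn) (hpos (c-1) (by omega))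
  -- single-step monotonicity of ratios
  have mono : ∀ k, 1 ≤ k → k + 1 ≤ n → a (k+1) / a k ≤ a k / a (k-1) := by
    intro k hk hkn
    rw [div_le_div_iff₀ (hpos k (by omega)) (hpos (k-1) (by omega))]
    have h := hlc k hk hkn
    nlinarith [hpos k (by omega : k ≤ n)]
  -- chained monotonicity
  have chain : ∀ k, 1 ≤ k → k + 1 ≤ n → ∀ j, 1 ≤ j → j ≤ k →
      a (k+1) / a k ≤ a (j+1) / a j := by
    intro k
    induction k with
    | zero => omega
    | succ m ih =>
      intro hk hkn j hj hjm
      rcases Nat.eq_or_lt_of_le hjm with h | h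
      · subst h; exact le_refl _
      · have hm1 : 1 ≤ m := by omega
        have step : a (m+1+1) / a (m+1) ≤ a (m+1) / a m := by
          have := mono (m+1) (by omega) hkn
          simpa using this
        exact le_trans step (ih hm1 (by omega) j hj (by omega))
  have hq_le : ∀ k, c - 1 ≤ k → k + 1 ≤ n → a (k+1) / a k ≤ q := by
    intro k hk hkn
    have h := chain k (by omega) hkn (c-1) (by omega) hk
    have hcc : c - 1 + 1 = c := by omega
    rw [hcc] at h
    exact h
  have hq_ge : ∀ j, 1 ≤ j → j ≤ c - 1 → q ≤ a (j+1) / a j := by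
    intro j hj hjc
    have h := chain (c-1) (by omega) (by omega) j hj hjc
    have hcc : c - 1 + 1 = c := by omega
    rw [hcc] at h
    exact h
  -- lower bound: d * q^(j-1) ≤ a j for 1 ≤ j ≤ c
  have lb : ∀ j, 1 ≤ j → j ≤ c → (d:ℝ) * q ^ (j-1) ≤ a j := by
    intro j
    induction j with
    | zero => omega
    | succ m ih =>
      intro _ hjc
      rcases Nat.eq_or_lt_of_le (by omega : 1 ≤ m + 1) with h | h
      · rw [← h]; simp [h1]
      · have hm1 : 1 ≤ m := by omega
        have ihm := ih hm1 (by omega)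
        have hqm : q ≤ a (m+1) / a m := hq_ge m hm1 (by omega)
        have ham : 0 < a m := hpos m (by omega)
        have : q * a m ≤ a (m+1) := by
          rw [le_div_iff₀ ham] at hqm; linarith
        have hpow : (d:ℝ) * q ^ (m+1-1) = ((d:ℝ) * q ^ (m-1)) * q := by
          have : m + 1 - 1 = (m - 1) + 1 := by omega
          rw [this]; ring
        rw [hpow]
        calc (d:ℝ) * q ^ (m-1) * q ≤ a m * q := by
              exact mul_le_mul_of_nonneg_right ihm (le_of_lt hqpos)
          _ ≤ a (m+1) := by linarith
  -- upper bound: a i ≤ a c * q^(i-c) for c ≤ i ≤ n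
  have ub : ∀ i, c ≤ i → i ≤ n → a i ≤ a c * q ^ (i - c) := by
    intro i hci
    induction i, hci using Nat.le_induction with
    | base => intro _; simp
    | succ m hm ih =>
      intro hmn
      have ihm := ih (by omega)
      have hqm : a (m+1) / a m ≤ q := hq_le m (by omega) hmn
      have ham : 0 < a m := hpos m (by omega)
      have hstep : a (m+1) ≤ a m * q := by
        rw [div_le_iff₀ ham] at hqm; linarith
      have hpow : a c * q ^ (m + 1 - c) = (a c * q ^ (m - c)) * q := by
        have : m + 1 - c = (m - c) + 1 := by omega
        rw [this]; ring
      rw [hpow]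
      calc a (m+1) ≤ a m * q := hstep
        _ ≤ (a c * q ^ (m-c)) * q := mul_le_mul_of_nonneg_right ihm (le_of_lt hqpos)
  -- key facts for the rpow combination
  have hdcpos : (0:ℝ) < (d:ℝ) ^ c := pow_pos hD0 c
  have hBd : (1 - (d : ℝ) ^ (-(c : ℤ))) * (d:ℝ) ^ c = (d:ℝ) ^ c - 1 := by
    have : (d : ℝ) ^ (-(c : ℤ)) = ((d:ℝ) ^ c)⁻¹ := by
      rw [zpow_neg, zpow_natCast]
    rw [this, sub_mul, one_mul, inv_mul_cancel₀ (ne_of_gt hdcpos)]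
  set B : ℝ := 1 - (d : ℝ) ^ (-(c : ℤ)) with hBdef
  have hB0 : 0 < B := by
    have h4 : (4:ℝ) ≤ (d:ℝ)^c := by
      calc (4:ℝ) = 2^2 := by norm_num
        _ ≤ (d:ℝ)^2 := by gcongr
        _ ≤ (d:ℝ)^c := pow_le_pow_right₀ (by linarith) hc2
    have : (d : ℝ) ^ (-(c : ℤ)) = ((d:ℝ) ^ c)⁻¹ := by
      rw [zpow_neg, zpow_natCast]
    rw [hBdef, this]
    have : ((d:ℝ)^c)⁻¹ ≤ (4:ℝ)⁻¹ := by
      apply inv_anti₀ (by norm_num) h4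
    linarith
  have hac' : a c ≤ B * (d:ℝ)^c := by rw [hBd]; exact hac
  -- key: q^(c-1) ≤ a c / d
  have hqc : q ^ (c-1) ≤ a c / d := by
    have h := lb c (by omega) le_rfl
    rw [le_div_iff₀ hD0]
    linarith [h]
  intro i hci hin
  have hub := ub i hci hin
  have hcr : (1:ℝ) ≤ (c:ℝ) - 1 := by
    have : (2:ℝ) ≤ (c:ℝ) := by exact_mod_cast hc2
    linarith
  have hcr0 : (c:ℝ) - 1 ≠ 0 := by linarith
  have hicast : ((i - c : ℕ) : ℝ) = (i:ℝ) - (c:ℝ) := by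
    push_cast [Nat.cast_sub hci]; ring
  set p : ℝ := ((i:ℝ) - (c:ℝ)) / ((c:ℝ) - 1) with hpdef
  have hp0 : 0 ≤ p := by
    apply div_nonneg
    · have : (c:ℝ) ≤ (i:ℝ) := by exact_mod_cast hci
      linarith
    · linarith
  have hmulp : ((c:ℝ) - 1) * p = (i:ℝ) - (c:ℝ) := by
    rw [hpdef]; field_simp
  -- combine
  have hccast : ((c - 1 : ℕ) : ℝ) = (c:ℝ) - 1 := by
    push_cast [Nat.cast_sub (by omega : 1 ≤ c)]; ring
  have step1 : q ^ (i - c) = (q ^ ((c - 1 : ℕ) : ℝ)) ^ p := by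
    rw [← Real.rpow_natCast q (i-c), hicast, hccast, ← hmulp,
      Real.rpow_mul (le_of_lt hqpos)]
  have step2 : q ^ (c - 1) ≤ B * (d:ℝ) ^ (c - 1) := by
    have hsplit : (d:ℝ)^c = (d:ℝ)^(c-1) * d := by
      rw [← pow_succ]; congr 1; omega
    have h1 : a c / d ≤ B * (d:ℝ)^c / d := by gcongr
    have h2 : B * (d:ℝ)^c / d = B * (d:ℝ)^(c-1) := by
      rw [hsplit]; field_simp
    calc q ^ (c-1) ≤ a c / d := hqc
      _ ≤ B * (d:ℝ)^c / d := h1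
      _ = B * (d:ℝ)^(c-1) := h2
  have step2' : (q ^ ((c - 1 : ℕ) : ℝ)) ^ p ≤ (B * (d:ℝ) ^ (c-1)) ^ p := by
    apply Real.rpow_le_rpow (Real.rpow_nonneg (le_of_lt hqpos) _) _ hp0
    rw [Real.rpow_natCast]; exact step2
  have step3 : (B * (d:ℝ) ^ (c-1)) ^ p = B ^ p * (d:ℝ) ^ (i - c : ℕ) := by
    rw [Real.mul_rpow (le_of_lt hB0) (by positivity)]
    congr 1
    rw [← Real.rpow_natCast (d:ℝ) (c-1), ← Real.rpow_natCast (d:ℝ) (i-c),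
      ← Real.rpow_mul (le_of_lt hD0), hccast, hmulp, hicast]
  have hqic : q ^ (i - c) ≤ B ^ p * (d:ℝ) ^ (i - c : ℕ) := by
    rw [step1, ← step3]; exact step2'
  have hfinal : a i ≤ (B * (d:ℝ)^c) * (B ^ p * (d:ℝ) ^ (i - c : ℕ)) := by
    calc a i ≤ a c * q ^ (i - c) := hub
      _ ≤ (B * (d:ℝ)^c) * q ^ (i - c) :=
          mul_le_mul_of_nonneg_right hac' (pow_nonneg (le_of_lt hqpos) _)
      _ ≤ (B * (d:ℝ)^c) * (B ^ p * (d:ℝ) ^ (i - c : ℕ)) := by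
          apply mul_le_mul_of_nonneg_left hqic
          positivity
  have hexp : (B * (d:ℝ)^c) * (B ^ p * (d:ℝ) ^ (i - c : ℕ))
      = B ^ (((i : ℝ) - 1) / ((c : ℝ) - 1)) * (d : ℝ) ^ i := by
    have hBp : B * B ^ p = B ^ (((i : ℝ) - 1) / ((c : ℝ) - 1)) := by
      have h : (1:ℝ) + p = ((i : ℝ) - 1) / ((c : ℝ) - 1) := by
        rw [hpdef]; field_simp; ring
      rw [← h, Real.rpow_add hB0, Real.rpow_one]
    have hdp : (d:ℝ)^c * (d:ℝ)^(i - c : ℕ) = (d:ℝ)^i := by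
      rw [← pow_add]; congr 1; omega
    calc (B * (d:ℝ)^c) * (B ^ p * (d:ℝ) ^ (i - c : ℕ))
        = (B * B ^ p) * ((d:ℝ)^c * (d:ℝ)^(i - c : ℕ)) := by ring
      _ = _ := by rw [hBp, hdp]
  rw [← hexp]
  exact hfinal
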